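/- (Cauchy–Schwarz step in the proof of Theorem 1.) Suppose the estimator g satisfies ∫ ‖g‖ f_m dμ < ∞ for every m = 0,…,P, ∫ ‖g − θ_0‖² f_0 dμ < ∞, and the pointwise C-unbiasedness conditions U_mᵀ W (∫ (g − θ_m) f_m dμ) = 0 for every m = 0,…,P. Then for every vector λ ∈ ℝ^{(P+1)(M−K)}, (∫ (g − θ_0)ᵀ W (g − θ_0) f_0 dμ) · (λᵀ D λ) ≥ (λᵀ t)². -/

import Mathlib

open MeasureTheory Matrix

/-- **Cauchy–Schwarz step in the proof of Theorem 1.**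
Under the integrability and pointwise C-unbiasedness assumptions on the estimator `g`,
for every vector `λ`, `(WMSE) · (λᵀ D λ) ≥ (λᵀ t)²`. -/
theorem lu_cbtb_cauchy_schwarz_step
    {Ω : Type*} [MeasurableSpace Ω] (μ : Measure Ω)
    (M K P : ℕ) (hK : 0 < K) (hKM : K < M) (hP : 1 ≤ P)
    (f : Fin (P + 1) → Ω → ℝ)
    (hf_meas : ∀ m, Measurable (f m))
    (hf_nonneg : ∀ m x, 0 ≤ f m x)
    (hf_int : ∀ m, Integrable (f m) μ)
    (hf_one : ∀ m, ∫ x, f m x ∂μ = 1)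
    (hf0_pos : ∀ᵐ x ∂μ, 0 < f 0 x)
    (B : Matrix (Fin (P + 1)) (Fin (P + 1)) ℝ)
    (hB : ∀ m n, B m n = ∫ x, f m x * f n x / f 0 x ∂μ)
    (hB_fin : ∀ m n, Integrable (fun x => f m x * f n x / f 0 x) μ)
    (θ : Fin (P + 1) → Fin M → ℝ)
    (W : Matrix (Fin M) (Fin M) ℝ) (hW : W.PosSemidef)
    (U : Fin (P + 1) → Matrix (Fin M) (Fin (M - K)) ℝ)
    (D : Matrix (Fin (P + 1) × Fin (M - K)) (Fin (P + 1) × Fin (M - K)) ℝ)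
    (hD : ∀ m n i j, D (m, i) (n, j) = ((U m)ᵀ * W * U n) i j * B m n)
    (t : Fin (P + 1) × Fin (M - K) → ℝ)
    (ht : ∀ m i, t (m, i) = (U m)ᵀ.mulVec (W.mulVec (fun k => θ m k - θ 0 k)) i)
    (g : Ω → Fin M → ℝ) (hg_meas : Measurable g)
    (hg_int1 : ∀ m, Integrable (fun x => ‖g x‖ * f m x) μ)
    (hg_int2 : Integrable (fun x => ‖g x - θ 0‖ ^ 2 * f 0 x) μ)
    (hg_cunbiased : ∀ m, (U m)ᵀ.mulVec (W.mulVec (∫ x, f m x • (g x - θ m) ∂μ)) = 0) :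
    ∀ lam : Fin (P + 1) × Fin (M - K) → ℝ,
      (∫ x, f 0 x * ((g x - θ 0) ⬝ᵥ W.mulVec (g x - θ 0)) ∂μ) * (lam ⬝ᵥ D.mulVec lam)
        ≥ (lam ⬝ᵥ t) ^ 2 := by
  intro lam
  classical
  -- symmetry of W
  have hWsym : ∀ i j, W i j = W j i := by
    intro i j
    conv_lhs => rw [← hW.1]
    simp [Matrix.conjTranspose_apply]
  have hWmul : ∀ v z : Fin M → ℝ, v ⬝ᵥ W.mulVec z = z ⬝ᵥ W.mulVec v := by
    intro v z
    simp only [dotProduct, Matrix.mulVec, Finset.mul_sum]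
    rw [Finset.sum_comm]
    exact Finset.sum_congr rfl fun i _ => Finset.sum_congr rfl fun j _ => by
      rw [hWsym j i]; ring
  -- adjoint identity
  have hAv : ∀ (A : Matrix (Fin M) (Fin (M - K)) ℝ) (v : Fin (M - K) → ℝ) (w : Fin M → ℝ),
      (A.mulVec v) ⬝ᵥ w = v ⬝ᵥ (Aᵀ.mulVec w) := by
    intro A v w
    rw [dotProduct_comm, Matrix.dotProduct_mulVec, ← Matrix.mulVec_transpose,
      dotProduct_comm]
  -- the vectors c m
  set c : Fin (P + 1) → Fin M → ℝ := fun m => (U m).mulVec (fun i => lam (m, i)) with hcdef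
  -- dot product bound
  have hdot : ∀ v w : Fin M → ℝ, |v ⬝ᵥ W.mulVec w| ≤ (∑ i, ∑ j, |W i j|) * (‖v‖ * ‖w‖) := by
    intro v w
    have h1 : v ⬝ᵥ W.mulVec w = ∑ i, ∑ j, v i * (W i j * w j) := by
      simp [dotProduct, Matrix.mulVec, Finset.mul_sum]
    rw [h1, Finset.sum_mul]
    refine (Finset.abs_sum_le_sum_abs _ _).trans (Finset.sum_le_sum fun i _ => ?_)
    rw [Finset.sum_mul]
    refine (Finset.abs_sum_le_sum_abs _ _).trans (Finset.sum_le_sum fun j _ => ?_)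
    have hv : |v i| ≤ ‖v‖ := by simpa using norm_le_pi_norm v i
    have hw : |w j| ≤ ‖w‖ := by simpa using norm_le_pi_norm w j
    calc |v i * (W i j * w j)| = |W i j| * (|v i| * |w j|) := by
          rw [abs_mul, abs_mul]; ring
      _ ≤ |W i j| * (‖v‖ * ‖w‖) := by
          refine mul_le_mul_of_nonneg_left ?_ (abs_nonneg _)
          exact mul_le_mul hv hw (abs_nonneg _) (norm_nonneg _)
  -- measurability of dot products
  have hdotmeas : ∀ (φ ψ : Ω → Fin M → ℝ), Measurable φ → Measurable ψ →
      Measurable (fun x => φ x ⬝ᵥ W.mulVec (ψ x)) := by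
    intro φ ψ hφ hψ
    simp only [dotProduct, Matrix.mulVec]
    apply Finset.measurable_sum
    intro i _
    apply Measurable.mul ((measurable_pi_apply i).comp hφ)
    apply Finset.measurable_sum
    intro j _
    exact ((measurable_pi_apply j).comp hψ).const_mul _
  have hmu : Measurable (fun x => g x - θ 0) := hg_meas.sub measurable_const
  -- integrability of q1
  have hq1_int : Integrable (fun x => f 0 x * ((g x - θ 0) ⬝ᵥ W.mulVec (g x - θ 0))) μ := by
    refine Integrable.mono' (hg_int2.const_mul (∑ i, ∑ j, |W i j|)) ?_ ?_
    · exact ((hf_meas 0).mul (hdotmeas _ _ hmu hmu)).aestronglyMeasurable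
    · filter_upwards with x
      rw [Real.norm_eq_abs, abs_mul, abs_of_nonneg (hf_nonneg 0 x)]
      calc f 0 x * |(g x - θ 0) ⬝ᵥ W.mulVec (g x - θ 0)|
          ≤ f 0 x * ((∑ i, ∑ j, |W i j|) * (‖g x - θ 0‖ * ‖g x - θ 0‖)) :=
            mul_le_mul_of_nonneg_left (hdot _ _) (hf_nonneg 0 x)
        _ = (∑ i, ∑ j, |W i j|) * (‖g x - θ 0‖ ^ 2 * f 0 x) := by ring
  -- integrability of Pi-valued f m • (g - a)
  have hint_sub : ∀ m (a : Fin M → ℝ), Integrable (fun x => f m x • (g x - a)) μ := by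
    intro m a
    refine Integrable.mono' ((hg_int1 m).add ((hf_int m).const_mul ‖a‖)) ?_ ?_
    · exact ((hf_meas m).smul (hg_meas.sub measurable_const)).aestronglyMeasurable
    · filter_upwards with x
      rw [norm_smul, Real.norm_eq_abs, abs_of_nonneg (hf_nonneg m x)]
      calc f m x * ‖g x - a‖ ≤ f m x * (‖g x‖ + ‖a‖) :=
            mul_le_mul_of_nonneg_left (norm_sub_le _ _) (hf_nonneg m x)
        _ = ‖g x‖ * f m x + ‖a‖ * f m x := by ring
  -- coordinatewise integrability
  have hint_coord : ∀ m (a : Fin M → ℝ) (i : Fin M),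
      Integrable (fun x => f m x * (g x i - a i)) μ := by
    intro m a i
    refine Integrable.mono' ((hg_int1 m).add ((hf_int m).const_mul ‖a‖)) ?_ ?_
    · exact ((hf_meas m).mul
        (((measurable_pi_apply i).comp hg_meas).sub measurable_const)).aestronglyMeasurable
    · filter_upwards with x
      rw [Real.norm_eq_abs, abs_mul, abs_of_nonneg (hf_nonneg m x)]
      have h1 : |g x i| ≤ ‖g x‖ := by simpa using norm_le_pi_norm (g x) i
      have h2 : |a i| ≤ ‖a‖ := by simpa using norm_le_pi_norm a i
      have h3 : |g x i - a i| ≤ ‖g x‖ + ‖a‖ :=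
        (abs_sub _ _).trans (add_le_add h1 h2)
      calc f m x * |g x i - a i| ≤ f m x * (‖g x‖ + ‖a‖) :=
            mul_le_mul_of_nonneg_left h3 (hf_nonneg m x)
        _ = ‖g x‖ * f m x + ‖a‖ * f m x := by ring
  -- the coordinate of the vector integral
  have hvm : ∀ m (i : Fin M), (∫ x, f m x • (g x - θ m) ∂μ) i
      = ∫ x, f m x * (g x i - θ m i) ∂μ := by
    intro m i
    have h := (ContinuousLinearMap.proj (R := ℝ) (φ := fun _ : Fin M => ℝ) i).integral_comp_comm
      (hint_sub m (θ m))
    simpa [Pi.smul_apply, smul_eq_mul] using h.symm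
  have hcoord_val : ∀ m (i : Fin M), ∫ x, f m x * (g x i - θ 0 i) ∂μ
      = (∫ x, f m x • (g x - θ m) ∂μ) i + (θ m i - θ 0 i) := by
    intro m i
    rw [hvm]
    have h1 : (fun x => f m x * (g x i - θ 0 i))
        = fun x => f m x * (g x i - θ m i) + (θ m i - θ 0 i) * f m x := by
      funext x; ring
    rw [h1, integral_add (hint_coord m (θ m) i) ((hf_int m).const_mul _),
      integral_const_mul, hf_one, mul_one]
  -- q2 : integrability
  have hq2_int : ∀ m, Integrable (fun x => f m x * ((g x - θ 0) ⬝ᵥ W.mulVec (c m))) μ := by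
    intro m
    refine Integrable.mono'
      (((hg_int1 m).add ((hf_int m).const_mul ‖θ 0‖)).const_mul
        ((∑ i, ∑ j, |W i j|) * ‖c m‖)) ?_ ?_
    · exact ((hf_meas m).mul (hdotmeas _ _ hmu measurable_const)).aestronglyMeasurable
    · filter_upwards with x
      rw [Real.norm_eq_abs, abs_mul, abs_of_nonneg (hf_nonneg m x)]
      have h0 : (0:ℝ) ≤ ∑ i, ∑ j, |W i j| :=
        Finset.sum_nonneg fun i _ => Finset.sum_nonneg fun j _ => abs_nonneg _
      have h1 : |(g x - θ 0) ⬝ᵥ W.mulVec (c m)|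
          ≤ (∑ i, ∑ j, |W i j|) * ((‖g x‖ + ‖θ 0‖) * ‖c m‖) := by
        refine (hdot _ _).trans ?_
        have hle : ‖g x - θ 0‖ ≤ ‖g x‖ + ‖θ 0‖ := norm_sub_le _ _
        have hcn : (0:ℝ) ≤ ‖c m‖ := norm_nonneg _
        exact mul_le_mul_of_nonneg_left (mul_le_mul_of_nonneg_right hle hcn) h0
      calc f m x * |(g x - θ 0) ⬝ᵥ W.mulVec (c m)|
          ≤ f m x * ((∑ i, ∑ j, |W i j|) * ((‖g x‖ + ‖θ 0‖) * ‖c m‖)) :=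
            mul_le_mul_of_nonneg_left h1 (hf_nonneg m x)
        _ = (∑ i, ∑ j, |W i j|) * ‖c m‖ * (‖g x‖ * f m x + ‖θ 0‖ * f m x) := by ring
  -- q2 : value
  have hq2_val : ∀ m, ∫ x, f m x * ((g x - θ 0) ⬝ᵥ W.mulVec (c m)) ∂μ
      = ∑ i, lam (m, i) * t (m, i) := by
    intro m
    have h1 : ∀ x, f m x * ((g x - θ 0) ⬝ᵥ W.mulVec (c m))
        = ∑ i, W.mulVec (c m) i * (f m x * (g x i - θ 0 i)) := by
      intro x
      simp only [dotProduct, Pi.sub_apply, Finset.mul_sum]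
      exact Finset.sum_congr rfl fun i _ => by ring
    simp_rw [h1]
    rw [integral_finset_sum _ (fun i _ => (hint_coord m (θ 0) i).const_mul _)]
    have h2 : ∀ i : Fin M, ∫ x, W.mulVec (c m) i * (f m x * (g x i - θ 0 i)) ∂μ
        = W.mulVec (c m) i * ((∫ x, f m x • (g x - θ m) ∂μ) i + (θ m i - θ 0 i)) := by
      intro i
      rw [integral_const_mul, hcoord_val]
    simp_rw [h2]
    set vm := ∫ x, f m x • (g x - θ m) ∂μ with hvmdef
    have h3 : ∑ i, W.mulVec (c m) i * (vm i + (θ m i - θ 0 i))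
        = vm ⬝ᵥ W.mulVec (c m) + (fun k => θ m k - θ 0 k) ⬝ᵥ W.mulVec (c m) := by
      simp only [dotProduct]
      rw [← Finset.sum_add_distrib]
      exact Finset.sum_congr rfl fun i _ => by ring
    rw [h3]
    have h4 : vm ⬝ᵥ W.mulVec (c m) = 0 := by
      rw [hWmul, hcdef]
      simp only
      rw [hAv, hg_cunbiased m]
      simp
    have h5 : (fun k => θ m k - θ 0 k) ⬝ᵥ W.mulVec (c m)
        = ∑ i, lam (m, i) * t (m, i) := by
      rw [hWmul, hcdef]
      simp only
      rw [hAv]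
      simp only [dotProduct]
      exact Finset.sum_congr rfl fun i _ => by rw [ht m i]
    rw [h4, h5, zero_add]
  -- q3 : integrability and value
  have hq3_int : ∀ m n,
      Integrable (fun x => f m x * f n x / f 0 x * (c m ⬝ᵥ W.mulVec (c n))) μ :=
    fun m n => (hB_fin m n).mul_const _
  have hq3_val : ∀ m n, ∫ x, f m x * f n x / f 0 x * (c m ⬝ᵥ W.mulVec (c n)) ∂μ
      = B m n * (c m ⬝ᵥ W.mulVec (c n)) := by
    intro m n
    rw [integral_mul_const, ← hB]
  -- identification of lam ⬝ᵥ D.mulVec lam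
  have hs : ∀ m n, c m ⬝ᵥ W.mulVec (c n)
      = ∑ i, ∑ j, lam (m, i) * (((U m)ᵀ * W * U n) i j * lam (n, j)) := by
    intro m n
    have h1 : c m ⬝ᵥ W.mulVec (c n)
        = (fun i => lam (m, i)) ⬝ᵥ (((U m)ᵀ * W * U n).mulVec (fun j => lam (n, j))) := by
      rw [← Matrix.mulVec_mulVec, ← Matrix.mulVec_mulVec, ← hAv]
    rw [h1]
    simp only [dotProduct, Matrix.mulVec, Finset.mul_sum]
  have hDq : lam ⬝ᵥ D.mulVec lam = ∑ m, ∑ n, B m n * (c m ⬝ᵥ W.mulVec (c n)) := by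
    have expand : lam ⬝ᵥ D.mulVec lam
        = ∑ p : Fin (P + 1) × Fin (M - K), ∑ q : Fin (P + 1) × Fin (M - K),
            lam p * (D p q * lam q) := by
      simp only [dotProduct, Matrix.mulVec, Finset.mul_sum]
    rw [expand, Fintype.sum_prod_type]
    have h1 : ∀ (m : Fin (P + 1)) (i : Fin (M - K)),
        ∑ q : Fin (P + 1) × Fin (M - K), lam (m, i) * (D (m, i) q * lam q)
        = ∑ n, ∑ j, lam (m, i) * (((U m)ᵀ * W * U n) i j * B m n * lam (n, j)) := by
      intro m i
      rw [Fintype.sum_prod_type]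
      exact Finset.sum_congr rfl fun n _ => Finset.sum_congr rfl fun j _ => by rw [hD]
    refine Finset.sum_congr rfl fun m _ => ?_
    simp_rw [h1]
    rw [Finset.sum_comm]
    refine Finset.sum_congr rfl fun n _ => ?_
    rw [hs m n, Finset.mul_sum]
    refine Finset.sum_congr rfl fun i _ => ?_
    rw [Finset.mul_sum]
    exact Finset.sum_congr rfl fun j _ => by ring
  -- total integrability
  have hq2T : Integrable (fun x => ∑ m, f m x * ((g x - θ 0) ⬝ᵥ W.mulVec (c m))) μ :=
    integrable_finset_sum _ fun m _ => hq2_int m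
  have hq3T : Integrable
      (fun x => ∑ m, ∑ n, f m x * f n x / f 0 x * (c m ⬝ᵥ W.mulVec (c n))) μ :=
    integrable_finset_sum _ fun m _ => integrable_finset_sum _ fun n _ => hq3_int m n
  -- values of total integrals
  have hIq2 : ∫ x, ∑ m, f m x * ((g x - θ 0) ⬝ᵥ W.mulVec (c m)) ∂μ = lam ⬝ᵥ t := by
    rw [integral_finset_sum _ fun m _ => hq2_int m]
    simp_rw [hq2_val]
    rw [dotProduct, Fintype.sum_prod_type]
  have hIq3 : ∫ x, ∑ m, ∑ n, f m x * f n x / f 0 x * (c m ⬝ᵥ W.mulVec (c n)) ∂μ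
      = lam ⬝ᵥ D.mulVec lam := by
    rw [integral_finset_sum _ fun m _ => integrable_finset_sum _ fun n _ => hq3_int m n]
    rw [hDq]
    refine Finset.sum_congr rfl fun m _ => ?_
    rw [integral_finset_sum _ fun n _ => hq3_int m n]
    exact Finset.sum_congr rfl fun n _ => hq3_val m n
  -- bilinearity helpers (pointwise)
  have hsubL : ∀ v z w : Fin M → ℝ,
      (v - z) ⬝ᵥ W.mulVec w = v ⬝ᵥ W.mulVec w - z ⬝ᵥ W.mulVec w := by
    intro v z w; rw [sub_dotProduct]
  have hsmulL : ∀ (a : ℝ) (v w : Fin M → ℝ),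
      (a • v) ⬝ᵥ W.mulVec w = a * (v ⬝ᵥ W.mulVec w) := by
    intro a v w; rw [smul_dotProduct]; simp
  have hsumL : ∀ (z : Fin (P + 1) → Fin M → ℝ) (w : Fin M → ℝ),
      (∑ m, z m) ⬝ᵥ W.mulVec w = ∑ m, z m ⬝ᵥ W.mulVec w := by
    intro z w
    simp only [dotProduct, Finset.sum_apply, Finset.sum_mul]
    exact Finset.sum_comm
  -- the quadratic is nonnegative
  set A := ∫ x, f 0 x * ((g x - θ 0) ⬝ᵥ W.mulVec (g x - θ 0)) ∂μ with hAdef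
  have key : ∀ r : ℝ, 0 ≤ (lam ⬝ᵥ D.mulVec lam) * (r * r) + (-2 * (lam ⬝ᵥ t)) * r + A := by
    intro r
    have hval : (lam ⬝ᵥ D.mulVec lam) * (r * r) + (-2 * (lam ⬝ᵥ t)) * r + A
        = ∫ x, ((r * r) * (∑ m, ∑ n, f m x * f n x / f 0 x * (c m ⬝ᵥ W.mulVec (c n)))
            - (2 * r) * (∑ m, f m x * ((g x - θ 0) ⬝ᵥ W.mulVec (c m)))
            + f 0 x * ((g x - θ 0) ⬝ᵥ W.mulVec (g x - θ 0))) ∂μ := by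
      have h3 : Integrable (fun x =>
          (r * r) * (∑ m, ∑ n, f m x * f n x / f 0 x * (c m ⬝ᵥ W.mulVec (c n)))) μ :=
        hq3T.const_mul _
      have h2 : Integrable (fun x =>
          (2 * r) * (∑ m, f m x * ((g x - θ 0) ⬝ᵥ W.mulVec (c m)))) μ :=
        hq2T.const_mul _
      have h12 : Integrable (fun x =>
          (r * r) * (∑ m, ∑ n, f m x * f n x / f 0 x * (c m ⬝ᵥ W.mulVec (c n)))
            - (2 * r) * (∑ m, f m x * ((g x - θ 0) ⬝ᵥ W.mulVec (c m)))) μ := h3.sub h2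
      rw [integral_add h12 hq1_int, integral_sub h3 h2,
        integral_const_mul, integral_const_mul, hIq2, hIq3, ← hAdef]
      ring
    rw [hval]
    apply integral_nonneg_of_ae
    filter_upwards [hf0_pos] with x hx
    set u : Fin M → ℝ := g x - θ 0 with hudef
    set w : Fin M → ℝ := ∑ m, f m x • c m with hwdef
    set a : ℝ := r / f 0 x with hadef
    have hyW : ∀ z : Fin M → ℝ, (u - a • w) ⬝ᵥ W.mulVec z
        = u ⬝ᵥ W.mulVec z - a * (w ⬝ᵥ W.mulVec z) := by
      intro z; rw [hsubL, hsmulL]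
    have hwL : ∀ z : Fin M → ℝ, w ⬝ᵥ W.mulVec z = ∑ m, f m x * (c m ⬝ᵥ W.mulVec z) := by
      intro z
      rw [hwdef, hsumL]
      exact Finset.sum_congr rfl fun m _ => hsmulL _ _ _
    have hq2x : u ⬝ᵥ W.mulVec w = ∑ m, f m x * (u ⬝ᵥ W.mulVec (c m)) := by
      rw [hWmul, hwL]
      exact Finset.sum_congr rfl fun m _ => by rw [hWmul]
    have hwWw : w ⬝ᵥ W.mulVec w
        = ∑ m, ∑ n, f m x * f n x * (c m ⬝ᵥ W.mulVec (c n)) := by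
      rw [hwL]
      refine Finset.sum_congr rfl fun m _ => ?_
      rw [hWmul, hwL, Finset.mul_sum]
      refine Finset.sum_congr rfl fun n _ => ?_
      rw [hWmul (c n) (c m)]
      ring
    have hyy : (u - a • w) ⬝ᵥ W.mulVec (u - a • w)
        = u ⬝ᵥ W.mulVec u - 2 * a * (u ⬝ᵥ W.mulVec w) + a * a * (w ⬝ᵥ W.mulVec w) := by
      rw [hyW]
      rw [hWmul u (u - a • w), hyW, hWmul w (u - a • w), hyW]
      rw [hWmul w u]
      ring
    have hnn : 0 ≤ f 0 x * ((u - a • w) ⬝ᵥ W.mulVec (u - a • w)) := by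
      refine mul_nonneg hx.le ?_
      have := hW.dotProduct_mulVec_nonneg (u - a • w)
      simpa using this
    refine le_trans hnn (le_of_eq ?_)
    rw [hyy, hq2x, hwWw]
    have hfx : f 0 x ≠ 0 := ne_of_gt hx
    have hq3x : (∑ m, ∑ n, f m x * f n x / f 0 x * (c m ⬝ᵥ W.mulVec (c n)))
        = (∑ m, ∑ n, f m x * f n x * (c m ⬝ᵥ W.mulVec (c n))) / f 0 x := by
      rw [Finset.sum_div]
      refine Finset.sum_congr rfl fun m _ => ?_
      rw [Finset.sum_div]
      refine Finset.sum_congr rfl fun n _ => ?_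
      field_simp
    rw [hq3x, hadef]
    field_simp
    ring
  -- conclude by the discriminant
  have hd := discrim_le_zero key
  rw [discrim] at hd
  nlinarith [hd]
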